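/- Let Γ be a maximal SKHM-consistent set of L_Khm formulas and M^c_Γ its canonical model. Given w ∈ S^c and an action a ∈ Σ_Γ of the form ⟨ψ,⊥,φ'⟩ or ⟨χ^ψ,φ'⟩ such that a is executable at w (w has at least one a-successor): if φ ∈ L(w') for every w' with w →a w', then U(φ' → φ) ∈ Γ. -/

import Mathlib

/-- Formulas of the language L_Khm over a countable set of proposition
letters (represented by `ℕ`): `φ ::= p | ¬φ | (φ∧φ) | Khm(φ,φ,φ)`. -/
inductive Formula : Type
  | atom : ℕ → Formula
  | neg : Formula → Formula
  | and : Formula → Formula → Formula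
  | khm : Formula → Formula → Formula → Formula
deriving DecidableEq

namespace Formula

/-- The falsum `⊥`, as a standard abbreviation. -/
def falsum : Formula := and (atom 0) (neg (atom 0))

/-- The verum `⊤`. -/
def top : Formula := neg falsum

/-- Material implication, as a standard abbreviation. -/
def imp (φ ψ : Formula) : Formula := neg (and φ (neg ψ))

/-- Biimplication. -/
def biimp (φ ψ : Formula) : Formula := and (imp φ ψ) (imp ψ φ)

/-- The universal modality `Uφ := Khm(¬φ, ⊤, ⊥)`. -/
def U (φ : Formula) : Formula := khm (neg φ) top falsum

/-- Uniform substitution of formulas for proposition letters. -/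
def subst (f : ℕ → Formula) : Formula → Formula
  | atom n => f n
  | neg φ => neg (subst f φ)
  | and φ ψ => and (subst f φ) (subst f ψ)
  | khm φ χ ψ => khm (subst f φ) (subst f χ) (subst f ψ)

end Formula

/-- A model (ability map): a labelled transition system over action symbols `Act`,
with a set of states `S`, transitions `R`, and valuation `V`. -/
structure Model (Act : Type) where
  S : Type
  R : Act → S → S → Prop
  V : S → Set ℕ

namespace Model

variable {Act : Type} (M : Model Act)

/-- `M.bigStep σ s t` : `s →σ t`, i.e. `t` is reachable from `s` by executing the
sequence of actions `σ`. -/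
def bigStep : List Act → M.S → M.S → Prop
  | [], s, t => s = t
  | a :: σ, s, t => ∃ u, M.R a s u ∧ bigStep σ u t

/-- `σ = a₁⋯aₙ` is strongly executable at `s` if for each `0 ≤ k < n`,
`s →σ_k t` implies `t` has at least one `a_{k+1}`-successor. -/
def stronglyExec (σ : List Act) (s : M.S) : Prop :=
  ∀ k (h : k < σ.length) (t : M.S),
    M.bigStep (σ.take k) s t → ∃ u, M.R (σ.get ⟨k, h⟩) t u

/-- Satisfaction. `M.sat (Formula.khm ψ χ φ) s` holds iff there is `σ ∈ Act*`
such that for every `s'` with `M, s' ⊨ ψ`: `σ` is strongly `χ`-executable at `s'`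
(strongly executable, and all strictly intermediate states satisfy `χ`) and
`M, t ⊨ φ` for all `t` with `s' →σ t`. -/
def sat : Formula → M.S → Prop
  | .atom n, s => n ∈ M.V s
  | .neg φ, s => ¬ sat φ s
  | .and φ ψ, s => sat φ s ∧ sat ψ s
  | .khm ψ χ φ, s => ∃ σ : List Act, ∀ s', sat ψ s' →
      (M.stronglyExec σ s' ∧
        ∀ k, 0 < k → k < σ.length → ∀ t, M.bigStep (σ.take k) s' t → sat χ t) ∧
      (∀ t, M.bigStep σ s' t → sat φ t)

end Model

/-- A formula is valid (w.r.t. the class of all models over action symbols `Act`)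
if it is satisfied at every state of every model. -/
def Valid (Act : Type) (φ : Formula) : Prop :=
  ∀ M : Model Act, Nonempty M.S → ∀ s : M.S, M.sat φ s

/-- Boolean evaluation treating proposition letters and `Khm`-formulas as atoms. -/
def evalB (v : Formula → Bool) : Formula → Bool
  | .atom n => v (.atom n)
  | .neg φ => ! evalB v φ
  | .and φ ψ => evalB v φ && evalB v ψ
  | .khm ψ χ φ => v (.khm ψ χ φ)

/-- Propositional tautologies. -/
def Tautology (φ : Formula) : Prop := ∀ v, evalB v φ = true

open Formula in
/-- Derivability in the proof system SKHM. -/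
inductive Deriv : Formula → Prop
  | taut {φ} : Tautology φ → Deriv φ
  | distU (p q) : Deriv (((U p).and (U (p.imp q))).imp (U q))
  | tU (p) : Deriv ((U p).imp p)
  | fourKhmU (p o q) : Deriv ((khm p o q).imp (U (khm p o q)))
  | fiveKhmU (p o q) : Deriv ((neg (khm p o q)).imp (U (neg (khm p o q))))
  | empKhm (p q) : Deriv ((U (p.imp q)).imp (khm p falsum q))
  | compKhm (p o r q) :
      Deriv ((((khm p o r).and (khm r o q)).and (U (r.imp o))).imp (khm p o q))
  | oneKhm (p o q) :
      Deriv (((khm p o q).and (neg (khm p falsum q))).imp (khm p falsum o))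
  | uKhm (p' p o o' q q') :
      Deriv (((((U (p'.imp p)).and (U (o.imp o'))).and (U (q.imp q'))).and
        (khm p o q)).imp (khm p' o' q'))
  | mp {φ ψ} : Deriv (φ.imp ψ) → Deriv φ → Deriv ψ
  | necU {φ} : Deriv φ → Deriv (U φ)
  | sub {φ} (f : ℕ → Formula) : Deriv φ → Deriv (φ.subst f)

/-- Conjunction of a finite list of formulas. -/
def conjList : List Formula → Formula
  | [] => Formula.top
  | φ :: L => φ.and (conjList L)

/-- A set of formulas is SKHM-consistent if no finite conjunction of its
members has its negation derivable in SKHM. -/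
def ConsistentSet (Γ : Set Formula) : Prop :=
  ∀ L : List Formula, (∀ φ ∈ L, φ ∈ Γ) → ¬ Deriv (Formula.neg (conjList L))

/-- Maximal SKHM-consistent set. -/
def MCS (Γ : Set Formula) : Prop :=
  ConsistentSet Γ ∧ ∀ Δ, ConsistentSet Δ → Γ ⊆ Δ → Δ = Γ

/-- `Δ|Khm`: the positive `Khm`-formulas of `Δ`. -/
def khmPart (Δ : Set Formula) : Set Formula :=
  {θ ∈ Δ | ∃ ψ χ φ, θ = Formula.khm ψ χ φ}

/-- `Φ_Γ`: the set of all MCSs `Δ` with `Δ|Khm = Γ|Khm`. -/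
def PhiGamma (Γ : Set Formula) : Set (Set Formula) :=
  {Δ | MCS Δ ∧ khmPart Δ = khmPart Γ}

/-- Canonical action symbols: `⟨ψ,⊥,φ⟩` (`one ψ φ`) and `⟨χ^ψ,φ⟩` (`two χ ψ φ`). -/
inductive CanAct : Type
  | one : Formula → Formula → CanAct
  | two : Formula → Formula → Formula → CanAct
deriving DecidableEq

/-- The formula in the last component of a canonical action. -/
def CanAct.post : CanAct → Formula
  | .one _ φ => φ
  | .two _ _ φ => φ

/-- The canonical action set
`Σ_Γ = {⟨ψ,⊥,φ⟩ : Khm(ψ,⊥,φ) ∈ Γ} ∪ {⟨χ^ψ,φ⟩ : Khm(ψ,χ,φ) ∈ Γ, ¬Khm(ψ,⊥,φ) ∈ Γ}`. -/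
def SigmaGamma (Γ : Set Formula) : Set CanAct :=
  {a | (∃ ψ φ, a = CanAct.one ψ φ ∧ Formula.khm ψ Formula.falsum φ ∈ Γ) ∨
       (∃ χ ψ φ, a = CanAct.two χ ψ φ ∧ Formula.khm ψ χ φ ∈ Γ ∧
          Formula.neg (Formula.khm ψ Formula.falsum φ) ∈ Γ)}

/-- Canonical states: pairs `(Δ, χ^ψ)` (the marker `χ^ψ` is the pair `(χ, ψ)`)
with `χ ∈ Δ ∈ Φ_Γ`, and either `⟨χ^ψ,φ⟩ ∈ Σ_Γ` for some `φ`, or `⟨ψ,⊥,χ⟩ ∈ Σ_Γ`. -/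
def CanStates (Γ : Set Formula) : Set (Set Formula × Formula × Formula) :=
  {w | w.1 ∈ PhiGamma Γ ∧ w.2.1 ∈ w.1 ∧
       ((∃ φ, CanAct.two w.2.1 w.2.2 φ ∈ SigmaGamma Γ) ∨
        CanAct.one w.2.2 w.2.1 ∈ SigmaGamma Γ)}

/-- The canonical model `M^c_Γ` over the action set `Σ_Γ`. For a canonical state
`w`, `L(w) = w.1.1` and `R(w) = w.1.2`. -/
def canonicalModel (Γ : Set Formula) : Model {a : CanAct // a ∈ SigmaGamma Γ} where
  S := {w : Set Formula × Formula × Formula // w ∈ CanStates Γ}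
  R a w w' :=
    match a.1 with
    | CanAct.one ψ φ => ψ ∈ w.1.1 ∧ w'.1.2 = (φ, ψ)
    | CanAct.two χ ψ φ => w.1.2 = (χ, ψ) ∧ φ ∈ w'.1.1
  V w := {n | Formula.atom n ∈ w.1.1}


section Aux
open Formula

/-- tautology-proving boilerplate is done per-lemma with boolean case splits -/

private lemma deriv_top : Deriv Formula.top :=
  Deriv.taut (by intro v; cases h0 : v (.atom 0) <;>
    simp [Formula.top, Formula.falsum, evalB, h0])

private lemma insert_extract {S : Set Formula} {ψ : Formula} :
    ∀ L : List Formula, (∀ θ ∈ L, θ ∈ insert ψ S) →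
    ∃ L', (∀ θ ∈ L', θ ∈ S) ∧ Deriv ((ψ.and (conjList L')).imp (conjList L)) := by
  intro L
  induction L with
  | nil =>
    intro _
    refine ⟨[], by simp, Deriv.taut ?_⟩
    intro v; cases h1 : evalB v ψ <;> cases h0 : v (.atom 0) <;>
      simp [conjList, Formula.imp, Formula.top, Formula.falsum, evalB, h1, h0]
  | cons θ L ih =>
    intro hmem
    obtain ⟨L', hL', hd⟩ := ih (fun x hx => hmem x (List.mem_cons_of_mem _ hx))
    have hθ := hmem θ (List.mem_cons_self)
    by_cases hcase : θ = ψ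
    · subst hcase
      refine ⟨L', hL', Deriv.mp (Deriv.taut ?_) hd⟩
      intro v
      cases h1 : evalB v θ <;> cases h2 : evalB v (conjList L') <;>
        cases h3 : evalB v (conjList L) <;>
        simp [conjList, Formula.imp, evalB, h1, h2, h3]
    · have hθS : θ ∈ S := by
        rcases Set.mem_insert_iff.1 hθ with h | h
        · exact absurd h hcase
        · exact h
      refine ⟨θ :: L', ?_, Deriv.mp (Deriv.taut ?_) hd⟩
      · intro x hx
        rcases List.mem_cons.1 hx with rfl | hx
        · exact hθS
        · exact hL' x hx
      · intro v
        cases h1 : evalB v ψ <;> cases h2 : evalB v (conjList L') <;>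
          cases h3 : evalB v (conjList L) <;> cases h4 : evalB v θ <;>
          simp [conjList, Formula.imp, evalB, h1, h2, h3, h4]

private lemma conj_append :
    ∀ L₁ L₂ : List Formula,
      Deriv ((conjList (L₁ ++ L₂)).imp ((conjList L₁).and (conjList L₂))) := by
  intro L₁ L₂
  induction L₁ with
  | nil =>
    apply Deriv.taut
    intro v; cases h1 : evalB v (conjList L₂) <;> cases h0 : v (.atom 0) <;>
      simp [conjList, Formula.imp, Formula.top, Formula.falsum, evalB, h1, h0]
  | cons ψ L ih =>
    refine Deriv.mp (Deriv.taut ?_) ih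
    intro v
    cases h1 : evalB v ψ <;> cases h2 : evalB v (conjList (L ++ L₂)) <;>
      cases h3 : evalB v (conjList L) <;> cases h4 : evalB v (conjList L₂) <;>
      simp [conjList, Formula.imp, evalB, h1, h2, h3, h4]

private lemma consistent_insert_or {Γ : Set Formula} (hΓ : ConsistentSet Γ)
    (φ : Formula) :
    ConsistentSet (insert φ Γ) ∨ ConsistentSet (insert φ.neg Γ) := by
  by_contra hcon
  push_neg at hcon
  obtain ⟨h1, h2⟩ := hcon
  unfold ConsistentSet at h1 h2
  push_neg at h1 h2
  obtain ⟨L₁, hL₁, hd₁⟩ := h1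
  obtain ⟨L₂, hL₂, hd₂⟩ := h2
  obtain ⟨L₁', hL₁', e₁⟩ := insert_extract L₁ hL₁
  obtain ⟨L₂', hL₂', e₂⟩ := insert_extract L₂ hL₂
  have happ := conj_append L₁' L₂'
  have hfinal : Deriv (Formula.neg (conjList (L₁' ++ L₂'))) := by
    refine Deriv.mp (Deriv.mp (Deriv.mp (Deriv.mp (Deriv.mp (Deriv.taut ?_) e₁) e₂) hd₁) hd₂)
      happ
    intro v
    cases ha : evalB v φ <;> cases hc1 : evalB v (conjList L₁') <;>
      cases hc2 : evalB v (conjList L₂') <;> cases hx1 : evalB v (conjList L₁) <;>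
      cases hx2 : evalB v (conjList L₂) <;> cases hy : evalB v (conjList (L₁' ++ L₂')) <;>
      simp [Formula.imp, evalB, ha, hc1, hc2, hx1, hx2, hy]
  refine hΓ (L₁' ++ L₂') ?_ hfinal
  intro x hx
  rcases List.mem_append.1 hx with hx | hx
  · exact hL₁' x hx
  · exact hL₂' x hx

private lemma mcs_not_both {Γ : Set Formula} (hΓ : MCS Γ) {φ : Formula}
    (h1 : φ ∈ Γ) (h2 : φ.neg ∈ Γ) : False := by
  refine hΓ.1 [φ, φ.neg] ?_ (Deriv.taut ?_)
  · intro x hx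
    rcases List.mem_cons.1 hx with rfl | hx
    · exact h1
    · rcases List.mem_cons.1 hx with rfl | hx
      · exact h2
      · simp at hx
  · intro v
    cases ha : evalB v φ <;> cases h0 : v (.atom 0) <;>
      simp [conjList, Formula.imp, Formula.top, Formula.falsum, evalB, ha, h0]

private lemma mcs_complete {Γ : Set Formula} (hΓ : MCS Γ) (φ : Formula) :
    φ ∈ Γ ∨ φ.neg ∈ Γ := by
  rcases consistent_insert_or hΓ.1 φ with h | h
  · left
    have heq : insert φ Γ = Γ := hΓ.2 _ h (Set.subset_insert _ _)
    exact heq ▸ Set.mem_insert _ _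
  · right
    have heq : insert φ.neg Γ = Γ := hΓ.2 _ h (Set.subset_insert _ _)
    exact heq ▸ Set.mem_insert _ _

private lemma mcs_mp {Γ : Set Formula} (hΓ : MCS Γ) {φ ψ : Formula}
    (h1 : φ ∈ Γ) (h2 : φ.imp ψ ∈ Γ) : ψ ∈ Γ := by
  rcases mcs_complete hΓ ψ with h | h
  · exact h
  · exfalso
    refine hΓ.1 [φ, φ.imp ψ, ψ.neg] ?_ (Deriv.taut ?_)
    · intro x hx
      rcases List.mem_cons.1 hx with rfl | hx
      · exact h1
      rcases List.mem_cons.1 hx with rfl | hx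
      · exact h2
      rcases List.mem_cons.1 hx with rfl | hx
      · exact h
      · simp at hx
    · intro v
      cases ha : evalB v φ <;> cases hb : evalB v ψ <;> cases h0 : v (.atom 0) <;>
        simp [conjList, Formula.imp, Formula.top, Formula.falsum, evalB, ha, hb, h0]

private lemma mcs_thm {Γ : Set Formula} (hΓ : MCS Γ) {φ : Formula}
    (hd : Deriv φ) : φ ∈ Γ := by
  rcases mcs_complete hΓ φ with h | h
  · exact h
  · exfalso
    refine hΓ.1 [φ.neg] ?_ ?_
    · intro x hx
      rcases List.mem_cons.1 hx with rfl | hx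
      · exact h
      · simp at hx
    refine Deriv.mp (Deriv.taut ?_) hd
    intro v
    cases ha : evalB v φ <;> cases h0 : v (.atom 0) <;>
      simp [conjList, Formula.imp, Formula.top, Formula.falsum, evalB, ha, h0]

private lemma mcs_mpd {Γ : Set Formula} (hΓ : MCS Γ) {φ ψ : Formula}
    (hd : Deriv (φ.imp ψ)) (h : φ ∈ Γ) : ψ ∈ Γ :=
  mcs_mp hΓ h (mcs_thm hΓ hd)

private lemma mcs_and {Γ : Set Formula} (hΓ : MCS Γ) {φ ψ : Formula}
    (h1 : φ ∈ Γ) (h2 : ψ ∈ Γ) : φ.and ψ ∈ Γ := by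
  have ht : Deriv (φ.imp (ψ.imp (φ.and ψ))) := by
    apply Deriv.taut
    intro v
    cases ha : evalB v φ <;> cases hb : evalB v ψ <;>
      simp [Formula.imp, evalB, ha, hb]
  exact mcs_mp hΓ h2 (mcs_mpd hΓ ht h1)

private lemma lindenbaum {T : Set Formula} (h : ConsistentSet T) :
    ∃ Δ, T ⊆ Δ ∧ MCS Δ := by
  have H : ∀ c ⊆ {S | ConsistentSet S}, IsChain (· ⊆ ·) c → c.Nonempty →
      ∃ ub ∈ {S | ConsistentSet S}, ∀ s ∈ c, s ⊆ ub := by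
    intro c hc hchain hne
    refine ⟨⋃₀ c, ?_, fun s hs => Set.subset_sUnion_of_mem hs⟩
    intro L hL hd
    have hmem : ∃ S ∈ c, ∀ θ ∈ L, θ ∈ S := by
      clear hd
      induction L with
      | nil => obtain ⟨S, hS⟩ := hne; exact ⟨S, hS, by simp⟩
      | cons θ L ih =>
        obtain ⟨S₁, hS₁, hall⟩ := ih (fun x hx => hL x (List.mem_cons_of_mem _ hx))
        obtain ⟨S₂, hS₂, hθ⟩ := hL θ (List.mem_cons_self)
        rcases hchain.total hS₁ hS₂ with hsub | hsub
        · refine ⟨S₂, hS₂, ?_⟩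
          intro x hx
          rcases List.mem_cons.1 hx with rfl | hx
          · exact hθ
          · exact hsub (hall x hx)
        · refine ⟨S₁, hS₁, ?_⟩
          intro x hx
          rcases List.mem_cons.1 hx with rfl | hx
          · exact hsub hθ
          · exact hall x hx
    obtain ⟨S, hS, hall⟩ := hmem
    exact hc hS L hall hd
  obtain ⟨m, hTm, hmax⟩ := zorn_subset_nonempty {S | ConsistentSet S} H T h
  exact ⟨m, hTm, hmax.1, fun Δ hc hsub => Set.Subset.antisymm (hmax.2 hc hsub) hsub⟩

private lemma phi_of {Γ Δ : Set Formula} (hΓ : MCS Γ) (hΔ : MCS Δ)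
    (hU : ∀ θ, Formula.U θ ∈ Γ → θ ∈ Δ) : Δ ∈ PhiGamma Γ := by
  refine ⟨hΔ, Set.ext fun θ => ?_⟩
  constructor
  · rintro ⟨hθΔ, ψ, χ, ρ, rfl⟩
    refine ⟨?_, ψ, χ, ρ, rfl⟩
    by_contra hno
    have hn : (Formula.khm ψ χ ρ).neg ∈ Γ := (mcs_complete hΓ _).resolve_left hno
    have hUn : Formula.U ((Formula.khm ψ χ ρ).neg) ∈ Γ :=
      mcs_mpd hΓ (Deriv.fiveKhmU ψ χ ρ) hn
    exact mcs_not_both hΔ hθΔ (hU _ hUn)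
  · rintro ⟨hθΓ, ψ, χ, ρ, rfl⟩
    exact ⟨hU _ (mcs_mpd hΓ (Deriv.fourKhmU ψ χ ρ) hθΓ), ψ, χ, ρ, rfl⟩

private lemma U_conj {Γ : Set Formula} (hΓ : MCS Γ) :
    ∀ L : List Formula, (∀ θ ∈ L, Formula.U θ ∈ Γ) →
      Formula.U (conjList L) ∈ Γ := by
  intro L
  induction L with
  | nil => intro _; exact mcs_thm hΓ (Deriv.necU deriv_top)
  | cons θ L ih =>
    intro hall
    have hUθ : Formula.U θ ∈ Γ := hall θ (List.mem_cons_self)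
    have hUC : Formula.U (conjList L) ∈ Γ :=
      ih (fun x hx => hall x (List.mem_cons_of_mem _ hx))
    have h1 : Deriv (θ.imp ((conjList L).imp (θ.and (conjList L)))) := by
      apply Deriv.taut
      intro v
      cases ha : evalB v θ <;> cases hb : evalB v (conjList L) <;>
        simp [Formula.imp, evalB, ha, hb]
    have h2 : Formula.U (θ.imp ((conjList L).imp (θ.and (conjList L)))) ∈ Γ :=
      mcs_thm hΓ (Deriv.necU h1)
    have h4 : Formula.U ((conjList L).imp (θ.and (conjList L))) ∈ Γ :=
      mcs_mp hΓ (mcs_and hΓ hUθ h2)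
        (mcs_thm hΓ (Deriv.distU θ ((conjList L).imp (θ.and (conjList L)))))
    exact mcs_mp hΓ (mcs_and hΓ hUC h4)
      (mcs_thm hΓ (Deriv.distU (conjList L) (θ.and (conjList L))))

private lemma key {Γ : Set Formula} (hΓ : MCS Γ) (φ' φ : Formula)
    (hbad : ∀ Δ, MCS Δ → Δ ∈ PhiGamma Γ → φ' ∈ Δ → φ.neg ∈ Δ → False) :
    Formula.U (φ'.imp φ) ∈ Γ := by
  by_cases hT : ConsistentSet (insert φ' (insert φ.neg {θ | Formula.U θ ∈ Γ}))
  · obtain ⟨Δ, hTΔ, hΔ⟩ := lindenbaum hT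
    have hΦ : Δ ∈ PhiGamma Γ :=
      phi_of hΓ hΔ (fun θ hθ => hTΔ (Set.mem_insert_iff.2 (Or.inr
        (Set.mem_insert_iff.2 (Or.inr hθ)))))
    exact (hbad Δ hΔ hΦ (hTΔ (Set.mem_insert _ _))
      (hTΔ (Set.mem_insert_iff.2 (Or.inr (Set.mem_insert _ _))))).elim
  · unfold ConsistentSet at hT
    push_neg at hT
    obtain ⟨L, hL, hd⟩ := hT
    obtain ⟨L₁, hL₁, d₁⟩ := insert_extract L hL
    obtain ⟨L₀, hL₀, d₂⟩ := insert_extract L₁ hL₁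
    have dimp : Deriv ((conjList L₀).imp (φ'.imp φ)) := by
      refine Deriv.mp (Deriv.mp (Deriv.mp (Deriv.taut ?_) d₁) d₂) hd
      intro v
      cases ha : evalB v φ' <;> cases hb : evalB v φ <;>
        cases hc0 : evalB v (conjList L₀) <;> cases hc1 : evalB v (conjList L₁) <;>
        cases hx : evalB v (conjList L) <;>
        simp [Formula.imp, evalB, ha, hb, hc0, hc1, hx]
    have hUC : Formula.U (conjList L₀) ∈ Γ := U_conj hΓ L₀ (fun θ hθ => hL₀ θ hθ)
    have hUimp : Formula.U ((conjList L₀).imp (φ'.imp φ)) ∈ Γ :=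
      mcs_thm hΓ (Deriv.necU dimp)
    exact mcs_mp hΓ (mcs_and hΓ hUC hUimp)
      (mcs_thm hΓ (Deriv.distU (conjList L₀) (φ'.imp φ)))

end Aux

/-- for a canonical state `w` and `a ∈ Σ_Γ` (of the form
`⟨ψ,⊥,φ'⟩` or `⟨χ^ψ,φ'⟩`, with last component `φ' = a.1.post`) executable at
`w`: if `φ ∈ L(w')` for every `w'` with `w →a w'`, then `U(φ' → φ) ∈ Γ`. -/
theorem IMPinTail (Γ : Set Formula) (hΓ : MCS Γ)
    (w : (canonicalModel Γ).S) (a : {a : CanAct // a ∈ SigmaGamma Γ})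
    (hexec : ∃ w', (canonicalModel Γ).R a w w') (φ : Formula)
    (h : ∀ w', (canonicalModel Γ).R a w w' → φ ∈ w'.1.1) :
    Formula.U ((a.1.post).imp φ) ∈ Γ := by
  obtain ⟨aval, ha⟩ := a
  cases aval with
  | one ψ φ' =>
    obtain ⟨w0, hw0⟩ := hexec
    have hψ : ψ ∈ w.1.1 := hw0.1
    show Formula.U (φ'.imp φ) ∈ Γ
    apply key hΓ
    intro Δ hΔ hΦ hφ' hφn
    have hst : ((Δ, (φ', ψ)) : Set Formula × Formula × Formula) ∈ CanStates Γ :=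
      ⟨hΦ, hφ', Or.inr ha⟩
    exact mcs_not_both hΔ (h ⟨(Δ, (φ', ψ)), hst⟩ ⟨hψ, rfl⟩) hφn
  | two χ ψ φ' =>
    obtain ⟨w0, hw0⟩ := hexec
    have hmark : w.1.2 = (χ, ψ) := hw0.1
    show Formula.U (φ'.imp φ) ∈ Γ
    have hkh : Formula.khm Formula.falsum Formula.falsum φ' ∈ Γ := by
      refine mcs_mpd hΓ (Deriv.empKhm Formula.falsum φ')
        (mcs_thm hΓ (Deriv.necU (Deriv.taut ?_)))
      intro v
      cases h0 : v (.atom 0) <;> cases h1 : evalB v φ' <;>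
        simp [Formula.imp, Formula.falsum, evalB, h0, h1]
    have hone : CanAct.one Formula.falsum φ' ∈ SigmaGamma Γ :=
      Or.inl ⟨Formula.falsum, φ', rfl, hkh⟩
    apply key hΓ
    intro Δ hΔ hΦ hφ' hφn
    have hst : ((Δ, (φ', Formula.falsum)) : Set Formula × Formula × Formula) ∈ CanStates Γ :=
      ⟨hΦ, hφ', Or.inr hone⟩
    exact mcs_not_both hΔ (h ⟨(Δ, (φ', Formula.falsum)), hst⟩ ⟨hmark, hφ'⟩) hφn
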